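/- Let C be the convex hull of a finite set of points in R^3 and let B be the minimal axis-parallel bounding box of C. Then the Hausdorff distance from B to C is at most sqrt(3/2) times the diameter of C. -/

import Mathlib

open Metric Set

/-- For a finite point set in ℝ³ with convex hull `C` and minimal
axis-parallel bounding box `B`, the Hausdorff distance from `B` to `C` is at most
`√(3/2)` times the diameter of `C`. -/
theorem stmt_0 (X : Set (EuclideanSpace ℝ (Fin 3))) (hX : X.Finite) (hne : X.Nonempty)
    (C B : Set (EuclideanSpace ℝ (Fin 3)))
    (hC : C = convexHull ℝ X)
    (hB : B = WithLp.ofLp ⁻¹' Set.univ.pi fun i =>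
      Set.Icc (sInf ((fun c => c i) '' C)) (sSup ((fun c => c i) '' C))) :
    Metric.hausdorffDist B C ≤ Real.sqrt (3 / 2) * Metric.diam C := by
  have hCconv : Convex ℝ C := hC ▸ convex_convexHull ℝ X
  have hCcomp : IsCompact C := hC ▸ hX.isCompact_convexHull (𝕜 := ℝ)
  have hCne : C.Nonempty := hC ▸ hne.mono (subset_convexHull ℝ X)
  set m : Fin 3 → ℝ := fun i => sInf ((fun c => c i) '' C) with hm_def
  set M : Fin 3 → ℝ := fun i => sSup ((fun c => c i) '' C) with hM_def
  have hproj : ∀ i : Fin 3, Continuous fun c : EuclideanSpace ℝ (Fin 3) => c i :=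
    fun i => PiLp.continuous_apply 2 _ i
  have himg : ∀ i, IsCompact ((fun c : EuclideanSpace ℝ (Fin 3) => c i) '' C) :=
    fun i => hCcomp.image (hproj i)
  have himgne : ∀ i, ((fun c : EuclideanSpace ℝ (Fin 3) => c i) '' C).Nonempty :=
    fun i => hCne.image _
  have hmmem : ∀ i, ∃ x ∈ C, x i = m i := by
    intro i
    have := (himg i).sInf_mem (himgne i)
    simpa using this
  have hMmem : ∀ i, ∃ x ∈ C, x i = M i := by
    intro i
    have := (himg i).sSup_mem (himgne i)
    simpa using this
  choose pm hpmC hpm using hmmem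
  choose pM hpMC hpM using hMmem
  -- every coordinate of a point of C lies in [m i, M i]
  have hcoord : ∀ x ∈ C, ∀ i, m i ≤ x i ∧ x i ≤ M i := by
    intro x hx i
    constructor
    · exact csInf_le (himg i).bddBelow ⟨x, hx, rfl⟩
    · exact le_csSup (himg i).bddAbove ⟨x, hx, rfl⟩
  have hCB : C ⊆ B := by
    intro x hx
    rw [hB]
    intro i _
    exact ⟨(hcoord x hx i).1, (hcoord x hx i).2⟩
  have hμ0 : 0 ≤ diam C := diam_nonneg
  -- coordinate difference bounded by distance
  have hcd : ∀ (x y : EuclideanSpace ℝ (Fin 3)) (i : Fin 3), |x i - y i| ≤ dist x y := by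
    intro x y i
    rw [EuclideanSpace.dist_eq]
    have h1 : |x i - y i| = Real.sqrt (dist (x i) (y i) ^ 2) := by
      rw [Real.sqrt_sq_eq_abs, Real.dist_eq, abs_abs]
    rw [h1]
    apply Real.sqrt_le_sqrt
    exact Finset.single_le_sum (f := fun j => dist (x j) (y j) ^ 2)
      (fun j _ => sq_nonneg _) (Finset.mem_univ i)
  -- width bounded by diameter
  have hw : ∀ i, M i - m i ≤ diam C := by
    intro i
    have h1 : dist (pM i) (pm i) ≤ diam C :=
      dist_le_diam_of_mem hCcomp.isBounded (hpMC i) (hpmC i)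
    have h2 := hcd (pM i) (pm i) i
    rw [hpM i, hpm i] at h2
    calc M i - m i ≤ |M i - m i| := le_abs_self _
      _ ≤ dist (pM i) (pm i) := h2
      _ ≤ diam C := h1
  have hw0 : ∀ i, 0 ≤ M i - m i := by
    intro i
    have h := hcoord (pm i) (hpmC i) i
    rw [hpm i] at h
    linarith [h.1, h.2]
  have hr0 : 0 ≤ Real.sqrt (3 / 2) * diam C :=
    mul_nonneg (Real.sqrt_nonneg _) hμ0
  apply hausdorffDist_le_of_mem_dist hr0
  · -- main direction : every b ∈ B is close to C
    intro b hb
    rw [hB] at hb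
    have hbi : ∀ i, m i ≤ b i ∧ b i ≤ M i := fun i => hb i (mem_univ i)
    -- interpolation parameter
    set t : Fin 3 → ℝ := fun i => if M i - m i = 0 then 0 else (b i - m i) / (M i - m i)
      with ht_def
    have ht0 : ∀ i, 0 ≤ t i := by
      intro i
      rw [ht_def]
      by_cases h : M i - m i = 0
      · simp [h]
      · simp only [h, if_false]
        exact div_nonneg (by linarith [(hbi i).1]) (hw0 i)
    have ht1 : ∀ i, t i ≤ 1 := by
      intro i
      rw [ht_def]
      by_cases h : M i - m i = 0
      · simp [h]
      · simp only [h, if_false]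
        rw [div_le_one (lt_of_le_of_ne (hw0 i) (Ne.symm h))]
        linarith [(hbi i).2]
    set q : Fin 3 → EuclideanSpace ℝ (Fin 3) :=
      fun i => (1 - t i) • pm i + t i • pM i with hq_def
    have hqC : ∀ i, q i ∈ C := by
      intro i
      exact hCconv (hpmC i) (hpMC i) (by linarith [ht1 i]) (ht0 i) (by ring)
    have hq_apply : ∀ i j, q i j = (1 - t i) * pm i j + t i * pM i j := by
      intro i j
      rw [hq_def]
      simp [PiLp.add_apply, PiLp.smul_apply, smul_eq_mul]
    have hqi : ∀ i, q i i = b i := by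
      intro i
      rw [hq_apply, hpm i, hpM i]
      by_cases h : M i - m i = 0
      · have ht : t i = 0 := by rw [ht_def]; simp [h]
        have hb1 := (hbi i).1
        have hb2 := (hbi i).2
        rw [ht]
        ring_nf
        linarith
      · have ht : t i = (b i - m i) / (M i - m i) := by rw [ht_def]; simp [h]
        rw [ht]
        field_simp
        ring
    -- all coordinates of q j lie in the box
    have hq_mem : ∀ j i, m i ≤ q j i ∧ q j i ≤ M i := by
      intro j i
      have h1 := hcoord (pm j) (hpmC j) i
      have h2 := hcoord (pM j) (hpMC j) i
      rw [hq_apply]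
      constructor
      · nlinarith [ht0 j, ht1 j, h1.1, h2.1]
      · nlinarith [ht0 j, ht1 j, h1.2, h2.2]
    -- the centroid
    set c : EuclideanSpace ℝ (Fin 3) := (1/3 : ℝ) • (q 0 + q 1 + q 2) with hc_def
    have hzC : (1/2 : ℝ) • q 0 + (1/2 : ℝ) • q 1 ∈ C :=
      hCconv (hqC 0) (hqC 1) (by norm_num) (by norm_num) (by norm_num)
    have hcC : c ∈ C := by
      have h := hCconv hzC (hqC 2) (show (0:ℝ) ≤ 2/3 by norm_num)
        (show (0:ℝ) ≤ 1/3 by norm_num) (by norm_num)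
      have he : (2/3 : ℝ) • ((1/2 : ℝ) • q 0 + (1/2 : ℝ) • q 1) + (1/3 : ℝ) • q 2 = c := by
        rw [hc_def]; module
      rwa [he] at h
    have hc_apply : ∀ i, c i = (q 0 i + q 1 i + q 2 i) / 3 := by
      intro i
      rw [hc_def]
      simp [PiLp.add_apply, PiLp.smul_apply, smul_eq_mul]
      ring
    -- coordinate-wise bound
    have hbc : ∀ i, |b i - c i| ≤ 2/3 * diam C := by
      intro i
      have key : |b i - c i| ≤ 2/3 * (M i - m i) := by
        have habs : ∀ j : Fin 3, |b i - q j i| ≤ M i - m i := by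
          intro j
          have h := hq_mem j i
          have hb' := hbi i
          rw [abs_le]
          constructor <;> linarith [h.1, h.2, hb'.1, hb'.2]
        have hzero : |b i - q i i| = 0 := by rw [hqi]; simp
        have hsum : ∑ j : Fin 3, |b i - q j i| ≤ 2 * (M i - m i) := by
          rw [← Finset.sum_erase_add _ _ (Finset.mem_univ i), hzero, add_zero]
          calc ∑ j ∈ Finset.univ.erase i, |b i - q j i|
              ≤ ∑ _j ∈ Finset.univ.erase i, (M i - m i) :=
                Finset.sum_le_sum fun j _ => habs j
            _ = 2 * (M i - m i) := by
                rw [Finset.sum_const, Finset.card_erase_of_mem (Finset.mem_univ i)]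
                simp [Finset.card_univ]
        have h3 : |∑ j : Fin 3, (b i - q j i)| ≤ 2 * (M i - m i) :=
          le_trans (Finset.abs_sum_le_sum_abs _ _) hsum
        have hrepr : b i - c i = (∑ j : Fin 3, (b i - q j i)) / 3 := by
          rw [hc_apply, Fin.sum_univ_three]; ring
        rw [hrepr, abs_div]
        rw [show |(3:ℝ)| = 3 by norm_num]
        linarith
      calc |b i - c i| ≤ 2/3 * (M i - m i) := key
        _ ≤ 2/3 * diam C := by nlinarith [hw i]
    refine ⟨c, hcC, ?_⟩
    rw [EuclideanSpace.dist_eq]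
    have hsum : ∑ i, dist (b i) (c i) ^ 2 ≤ 3/2 * diam C ^ 2 := by
      have hterm : ∀ i, dist (b i) (c i) ^ 2 ≤ (2/3 * diam C)^2 := by
        intro i
        rw [Real.dist_eq]
        have := hbc i
        nlinarith [abs_nonneg (b i - c i)]
      calc ∑ i, dist (b i) (c i) ^ 2 ≤ ∑ _i : Fin 3, (2/3 * diam C)^2 :=
            Finset.sum_le_sum (fun i _ => hterm i)
        _ = 3 * (2/3 * diam C)^2 := by rw [Fin.sum_univ_three]; ring
        _ ≤ 3/2 * diam C ^ 2 := by nlinarith [hμ0]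
    calc Real.sqrt (∑ i, dist (b i) (c i) ^ 2) ≤ Real.sqrt (3/2 * diam C ^ 2) :=
          Real.sqrt_le_sqrt hsum
      _ = Real.sqrt (3/2) * diam C := by
          rw [Real.sqrt_mul (by norm_num), Real.sqrt_sq hμ0]
  · intro x hx
    exact ⟨x, hCB hx, by rw [dist_self]; exact hr0⟩
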